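/- arXiv:2302.01705 — 2 statements merged into one kernel-verified Lean document; each statement's English description precedes it below -/
import Mathlib

section
/- For every C* > 0 there exists a constant C > 0, depending only on C*, with the following property. Let κ = conv{x,y,z} ⊂ ℝ³ be a C*-regular triangle with unit normal n̄(κ), let N : ℝ³ → ℝ³ be an affine map with linear part L, let D = L∘P with P the orthogonal projection of ℝ³ onto span{y−x, z−x}, and let m₁ = (x+y)/2 and m₂ = (y+z)/2. Assume only the orthogonality conditions N(m₁)·(y−x) = 0 and N(m₂)·(z−y) = 0 (no normalization of N(m₁), N(m₂) is assumed). Then |n̄(κ) × N(m₁)| ≤ C·diam(κ)·‖D‖. -/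
open scoped RealInnerProductSpace

noncomputable section

/-- Euclidean 3-space. -/
abbrev E3 := EuclideanSpace ℝ (Fin 3)

/-- The cross product on `ℝ³`. -/
def cross3 (u v : E3) : E3 :=
  (WithLp.equiv 2 (Fin 3 → ℝ)).symm
    ![u 1 * v 2 - u 2 * v 1, u 2 * v 0 - u 0 * v 2, u 0 * v 1 - u 1 * v 0]

/-- The diameter of the triangle `conv{x,y,z}`. -/
def diam3 (x y z : E3) : ℝ := max ‖y - x‖ (max ‖z - x‖ ‖z - y‖)

/-- The area of the triangle `conv{x,y,z}`. -/
def area3 (x y z : E3) : ℝ := ‖cross3 (y - x) (z - x)‖ / 2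

/-- The unit normal `n̄(κ)` of the triangle `κ = conv{x,y,z}`. -/
def unitNormal (x y z : E3) : E3 :=
  ‖cross3 (y - x) (z - x)‖⁻¹ • cross3 (y - x) (z - x)

/-- The orthogonal projection of `ℝ³` onto the tangent plane `span{y−x, z−x}`
of the triangle `conv{x,y,z}`, as a map `ℝ³ → ℝ³`. -/
def tangentProj (x y z : E3) : E3 →L[ℝ] E3 :=
  (Submodule.span ℝ {y - x, z - x}).subtypeL ∘L
    Submodule.orthogonalProjection (Submodule.span ℝ {y - x, z - x})

/-- The tangentially projected linear part `D = L∘P` of an affine map `N` with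
linear part `L`, relative to the triangle `conv{x,y,z}`. -/
def tangGrad (N : E3 →ᵃ[ℝ] E3) (x y z : E3) : E3 →L[ℝ] E3 :=
  (LinearMap.toContinuousLinearMap N.linear) ∘L tangentProj x y z

lemma inner3 (u v : E3) : ⟪u, v⟫ = u 0 * v 0 + u 1 * v 1 + u 2 * v 2 := by
  simp [PiLp.inner_apply, RCLike.inner_apply, Fin.sum_univ_three]
  ring

lemma cross3_app (u v : E3) (i : Fin 3) :
    cross3 u v i = ![u 1 * v 2 - u 2 * v 1, u 2 * v 0 - u 0 * v 2, u 0 * v 1 - u 1 * v 0] i := rfl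

lemma triple3 (a b w : E3) :
    cross3 (cross3 a b) w = ⟪w,a⟫ • b - ⟪w,b⟫ • a := by
  ext i
  fin_cases i <;>
    simp [cross3_app, inner3, Fin.sum_univ_three, PiLp.smul_apply, PiLp.sub_apply, smul_eq_mul] <;> ring

lemma cross3_smul_left (s : ℝ) (u v : E3) : cross3 (s • u) v = s • cross3 u v := by
  ext i
  fin_cases i <;>
    simp [cross3_app, PiLp.smul_apply, smul_eq_mul] <;> ring

/-- the cross-product estimate
`|n̄(κ) × N(m₁)| ≤ C·diam(κ)·‖D‖`, valid without any normalization of the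
edge director values. -/
theorem stmt_3 (Cstar : ℝ) (hCstar : 0 < Cstar) :
    ∃ C > (0 : ℝ), ∀ (x y z : E3) (N : E3 →ᵃ[ℝ] E3),
      ¬ Collinear ℝ ({x, y, z} : Set E3) →
      Cstar * diam3 x y z ^ 2 ≤ area3 x y z →
      ⟪N (midpoint ℝ x y), y - x⟫ = 0 →
      ⟪N (midpoint ℝ y z), z - y⟫ = 0 →
      ‖cross3 (unitNormal x y z) (N (midpoint ℝ x y))‖ ≤
        C * diam3 x y z * ‖tangGrad N x y z‖ := by
  refine ⟨1 / (4 * Cstar), by positivity, ?_⟩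
  intro x y z N hcol hreg h1 h2
  have hxy : x ≠ y := by
    rintro rfl
    exact hcol (by simpa [Set.insert_comm, Set.insert_idem] using collinear_pair ℝ x z)
  set d := diam3 x y z with hd_def
  have hd : 0 < d := lt_of_lt_of_le (by simpa [sub_eq_zero] using hxy.symm)
    (le_max_left _ _)
  set a := y - x with ha
  set b := z - x with hb
  set c := cross3 a b with hc
  set v := N (midpoint ℝ x y) with hv
  have hcpos : 0 < ‖c‖ := by
    have : 0 < Cstar * d ^ 2 := by positivity
    have harea : Cstar * d ^ 2 ≤ ‖c‖ / 2 := hreg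
    linarith
  -- norms ≤ d
  have hA : ‖a‖ ≤ d := le_max_left _ _
  have hB : ‖b‖ ≤ d := le_trans (le_max_left _ _) (le_max_right _ _)
  have hC : ‖z - y‖ ≤ d := le_trans (le_max_right _ _) (le_max_right _ _)
  -- the tangential gradient on b
  have hbK : b ∈ Submodule.span ℝ ({y - x, z - x} : Set E3) :=
    Submodule.subset_span (by simp [hb])
  have hproj : tangentProj x y z ((2⁻¹ : ℝ) • b) = (2⁻¹ : ℝ) • b := by
    have hmem : (2⁻¹ : ℝ) • b ∈ Submodule.span ℝ ({y - x, z - x} : Set E3) :=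
      Submodule.smul_mem _ _ hbK
    simp only [tangentProj, ContinuousLinearMap.comp_apply, Submodule.subtypeL_apply]
    exact Submodule.starProjection_eq_self_iff.mpr hmem
  have hDb : tangGrad N x y z ((2⁻¹ : ℝ) • b) = N.linear ((2⁻¹ : ℝ) • b) := by
    simp only [tangGrad, ContinuousLinearMap.comp_apply, hproj,
      LinearMap.coe_toContinuousLinearMap']
  -- midpoint difference
  have hmid : midpoint ℝ y z - midpoint ℝ x y = (2⁻¹ : ℝ) • b := by
    simp only [midpoint_eq_smul_add, invOf_eq_inv, hb]
    module
  have hlin : N (midpoint ℝ y z) = v + N.linear ((2⁻¹ : ℝ) • b) := by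
    have := N.linearMap_vsub (midpoint ℝ y z) (midpoint ℝ x y)
    rw [vsub_eq_sub, vsub_eq_sub, hmid] at this
    rw [this, hv]; abel
  have hvzy : ⟪v, z - y⟫ = -⟪tangGrad N x y z ((2⁻¹ : ℝ) • b), z - y⟫ := by
    rw [hDb]
    have h2' : ⟪v + N.linear ((2⁻¹ : ℝ) • b), z - y⟫ = 0 := by rw [← hlin]; exact h2
    rw [inner_add_left] at h2'
    linarith
  -- the cross product
  have hva : ⟪v, a⟫ = 0 := h1
  have hvb : ⟪v, b⟫ = ⟪v, z - y⟫ := by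
    have hba : b = a + (z - y) := by rw [ha, hb]; abel
    rw [hba, inner_add_right, hva, zero_add]
  have hcv : cross3 c v = (-⟪v, z - y⟫) • a := by
    rw [hc, triple3, hva, hvb, zero_smul, zero_sub, neg_smul]
  have hun : unitNormal x y z = ‖c‖⁻¹ • c := rfl
  have hnorm : ‖cross3 (unitNormal x y z) v‖ = ‖c‖⁻¹ * (|⟪v, z - y⟫| * ‖a‖) := by
    rw [hun, cross3_smul_left, hcv, norm_smul, norm_smul]
    simp [abs_of_nonneg (inv_nonneg.mpr (norm_nonneg c))]
  rw [hnorm]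
  set T := ‖tangGrad N x y z‖ with hT
  have hTnn : 0 ≤ T := norm_nonneg _
  have hI : |⟪v, z - y⟫| ≤ T * (2⁻¹ * ‖b‖) * ‖z - y‖ := by
    rw [hvzy, abs_neg]
    calc |⟪tangGrad N x y z ((2⁻¹ : ℝ) • b), z - y⟫|
        ≤ ‖tangGrad N x y z ((2⁻¹ : ℝ) • b)‖ * ‖z - y‖ := abs_real_inner_le_norm _ _
      _ ≤ (T * ‖(2⁻¹ : ℝ) • b‖) * ‖z - y‖ := by
          gcongr; exact (tangGrad N x y z).le_opNorm _
      _ = T * (2⁻¹ * ‖b‖) * ‖z - y‖ := by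
          rw [norm_smul]; norm_num
  have hclow : 2 * Cstar * d ^ 2 ≤ ‖c‖ := by
    have harea : Cstar * d ^ 2 ≤ ‖c‖ / 2 := hreg
    linarith
  have key : ‖c‖⁻¹ * (|⟪v, z - y⟫| * ‖a‖) ≤ (2 * Cstar * d ^ 2)⁻¹ * (T * (2⁻¹ * d) * d * d) := by
    have h1' : |⟪v, z - y⟫| * ‖a‖ ≤ T * (2⁻¹ * d) * d * d := by
      calc |⟪v, z - y⟫| * ‖a‖ ≤ (T * (2⁻¹ * ‖b‖) * ‖z - y‖) * ‖a‖ := by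
            gcongr
        _ ≤ T * (2⁻¹ * d) * d * d := by gcongr
    have h2' : ‖c‖⁻¹ ≤ (2 * Cstar * d ^ 2)⁻¹ := by
      apply inv_anti₀ (by positivity) hclow
    exact mul_le_mul h2' h1' (by positivity) (by positivity)
  calc ‖c‖⁻¹ * (|⟪v, z - y⟫| * ‖a‖) ≤ (2 * Cstar * d ^ 2)⁻¹ * (T * (2⁻¹ * d) * d * d) := key
    _ = 1 / (4 * Cstar) * d * T := by field_simp; ring
end
end

section
/- For every C* > 0 there exist constants C > 0 and c > 0, depending only on C*, with the following property. Let κ = conv{x,y,z} and κ' = conv{x,y,w} be C*-regular triangles in ℝ³ sharing the edge [x,y]. Let ν = n̄(κ) and let ν' ∈ {n̄(κ'), −n̄(κ')} be chosen with ν + ν' ≠ 0; set n₀ = (ν + ν')/|ν + ν'| and d = max(diam(κ), diam(κ')). Let N, N' : ℝ³ → ℝ³ be affine maps, with tangentially projected linear parts D (with respect to κ) and D' (with respect to κ'). Assume: N((x+y)/2)·(y−x) = 0, N((y+z)/2)·(z−y) = 0, N'((x+y)/2)·(y−x) = 0, N'((y+w)/2)·(w−y) = 0, N((x+y)/2) =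 N'((x+y)/2), and N((x+y)/2)·n₀ = 1. If d·(‖D‖ + ‖D'‖) ≤ c, then |N((x+y)/2) − ν| ≤ C·d·(‖D‖ + ‖D'‖). (This is the paper's comparison lemma for pseudo-unit edge directors.) -/
open scoped RealInnerProductSpace

noncomputable section

/-! ### Auxiliary lemmas -/

lemma inner3_aux (a b : E3) : ⟪a,b⟫ = a 0 * b 0 + a 1 * b 1 + a 2 * b 2 := by
  simp [PiLp.inner_apply, Fin.sum_univ_three]; ring

lemma identA_aux (u v n : E3) :
    ⟪cross3 u v, cross3 u v⟫ • n =
      ⟪n, cross3 u v⟫ • cross3 u v + ⟪n, v⟫ • cross3 (cross3 u v) u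
        - ⟪n, u⟫ • cross3 (cross3 u v) v := by
  ext i
  fin_cases i <;>
    · simp only [inner3_aux]; simp [cross3, Fin.sum_univ_three]
      ring

lemma lagrange_aux (a b : E3) :
    ⟪cross3 a b, cross3 a b⟫ = ⟪a,a⟫*⟪b,b⟫ - ⟪a,b⟫^2 := by
  simp only [inner3_aux]; simp [cross3]; ring

lemma cross_orth_left_aux (u v : E3) : ⟪cross3 u v, u⟫ = 0 := by
  simp [cross3, inner3_aux, Fin.sum_univ_three]; ring

lemma arith1_aux (r ε : ℝ) (hr4 : r ≤ 2) (hr0 : 0 < r) (h4 : 4 - r^2 ≤ 2*ε^2) :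
    2 - r ≤ ε^2 := by nlinarith

lemma arith2_aux (ε : ℝ) (h0 : 0 ≤ ε) (h1 : ε ≤ 1/2) : ε^2 ≤ ε/2 := by nlinarith

set_option maxHeartbeats 1000000 in
/-- The abstract comparison lemma. -/
lemma key_aux {V : Type*} [NormedAddCommGroup V] [InnerProductSpace ℝ V]
    (ν ν' n : V) (δ δ' : ℝ)
    (hν : ‖ν‖ = 1) (hν' : ‖ν'‖ = 1) (hne : ν + ν' ≠ 0)
    (H1 : ‖n - ⟪n, ν⟫ • ν‖ ≤ δ)
    (H2 : ‖n - ⟪n, ν'⟫ • ν'‖ ≤ δ')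
    (H3 : ⟪n, ν + ν'⟫ = ‖ν + ν'‖)
    (hsmall : δ + δ' ≤ 1/2) :
    ‖n - ν‖ ≤ 2 * (δ + δ') := by
  set r : ℝ := ‖ν + ν'‖ with hr_def
  have hδ0 : (0:ℝ) ≤ δ := le_trans (norm_nonneg _) H1
  have hδ'0 : (0:ℝ) ≤ δ' := le_trans (norm_nonneg _) H2
  set ε : ℝ := δ + δ' with hε_def
  have hε0 : (0:ℝ) ≤ ε := by positivity
  have hr0 : 0 < r := norm_pos_iff.mpr hne
  set s : ℝ := ⟪ν, ν'⟫ with hs_def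
  have hr2 : r ^ 2 = 2 + 2 * s := by
    rw [hr_def, norm_add_sq_real, hν, hν']; ring
  have hs1 : s ≤ 1 := by
    calc s ≤ ‖ν‖ * ‖ν'‖ := real_inner_le_norm ν ν'
    _ = 1 := by rw [hν, hν']; ring
  have hr4 : r ≤ 2 := by nlinarith
  set a : ℝ := ⟪n, ν⟫ with ha_def
  set a' : ℝ := ⟪n, ν'⟫ with ha'_def
  set t : V := n - a • ν with ht_def
  set t' : V := n - a' • ν' with ht'_def
  have hsum : a + a' = r := by
    rw [← H3, inner_add_right]
  have hνsum : ⟪ν, ν + ν'⟫ = r^2/2 := by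
    rw [inner_add_right, real_inner_self_eq_norm_sq, hν, hr2]; ring
  have hν'sum : ⟪ν', ν + ν'⟫ = r^2/2 := by
    rw [inner_add_right, real_inner_self_eq_norm_sq, hν', hr2, real_inner_comm]; ring
  have htsum : ⟪t, ν + ν'⟫ = r - a * (r^2/2) := by
    rw [ht_def, inner_sub_left, real_inner_smul_left, hνsum, H3]
  have ht'sum : ⟪t', ν + ν'⟫ = r - a' * (r^2/2) := by
    rw [ht'_def, inner_sub_left, real_inner_smul_left, hν'sum, H3]
  have hbd : |r - a * (r^2/2)| ≤ δ * r := by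
    rw [← htsum]
    calc |⟪t, ν + ν'⟫| ≤ ‖t‖ * ‖ν + ν'‖ := abs_real_inner_le_norm _ _
    _ ≤ δ * r := mul_le_mul H1 le_rfl (norm_nonneg _) hδ0
  have hbd' : |r - a' * (r^2/2)| ≤ δ' * r := by
    rw [← ht'sum]
    calc |⟪t', ν + ν'⟫| ≤ ‖t'‖ * ‖ν + ν'‖ := abs_real_inner_le_norm _ _
    _ ≤ δ' * r := mul_le_mul H2 le_rfl (norm_nonneg _) hδ'0
  have haL : 1 - δ ≤ a * (r/2) := by
    have h := (abs_le.mp hbd).2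
    nlinarith
  have haL' : 1 - δ' ≤ a' * (r/2) := by
    have h := (abs_le.mp hbd').2
    nlinarith
  have hapos : 0 < a := by
    by_contra h
    push_neg at h
    have : a * (r/2) ≤ 0 := mul_nonpos_of_nonpos_of_nonneg h (by positivity)
    linarith
  have ha'pos : 0 < a' := by
    by_contra h
    push_neg at h
    have : a' * (r/2) ≤ 0 := mul_nonpos_of_nonpos_of_nonneg h (by positivity)
    linarith
  have ha_pos : 1 - δ ≤ a :=
    le_trans haL (mul_le_of_le_one_right hapos.le (by linarith))
  have ha'_pos : 1 - δ' ≤ a' :=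
    le_trans haL' (mul_le_of_le_one_right ha'pos.le (by linarith))
  have hE : ‖a • ν - a' • ν'‖ ≤ ε := by
    have heq : a • ν - a' • ν' = t' - t := by rw [ht_def, ht'_def]; abel
    rw [heq]
    calc ‖t' - t‖ ≤ ‖t'‖ + ‖t‖ := norm_sub_le _ _
    _ ≤ ε := by rw [hε_def]; linarith
  have hE2 : ‖a • ν - a' • ν'‖^2 = (a - a')^2 + 2*(a*a')*(1-s) := by
    rw [norm_sub_sq_real, norm_smul, norm_smul, real_inner_smul_left,
      real_inner_smul_right, hν, hν', ← hs_def]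
    simp only [mul_one, Real.norm_eq_abs]
    rw [sq_abs, sq_abs]
    ring
  have hE2' : (a - a')^2 + 2*(a*a')*(1-s) ≤ ε^2 := by
    rw [← hE2]
    exact pow_le_pow_left₀ (norm_nonneg _) hE 2
  have haa' : (1:ℝ)/2 ≤ a * a' := by
    have hm : (1-δ) * (1-δ') ≤ a * a' :=
      mul_le_mul ha_pos ha'_pos (by linarith) (by linarith)
    have hexp : (1-δ) * (1-δ') = 1 - δ - δ' + δ*δ' := by ring
    linarith [mul_nonneg hδ0 hδ'0]
  have hs0 : 0 ≤ 1 - s := by linarith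
  have h1s : 1 - s ≤ ε^2 := by
    have hm := mul_le_mul_of_nonneg_right haa' hs0
    linarith [sq_nonneg (a - a')]
  have haa : (a - a')^2 ≤ ε^2 := by
    have hm := mul_le_mul_of_nonneg_right haa' hs0
    linarith
  have habs : |a - a'| ≤ ε := abs_le.mpr (abs_le_of_sq_le_sq' haa hε0)
  have hr2' : 2 - r ≤ ε^2 := arith1_aux r ε hr4 hr0 (by linarith)
  have haone : |a - 1| ≤ ε := by
    have h1 : a - r/2 = (a - a')/2 := by linarith
    have h2 : |a - 1| ≤ |a - r/2| + |r/2 - 1| :=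
      calc |a - 1| = |(a - r/2) + (r/2 - 1)| := by ring_nf
      _ ≤ |a - r/2| + |r/2 - 1| := abs_add_le _ _
    have h3 : |a - r/2| ≤ ε/2 := by
      rw [h1, abs_div, abs_two]
      linarith
    have h4 : |r/2 - 1| ≤ ε^2/2 := by
      rw [abs_sub_comm, abs_of_nonneg (by nlinarith : (0:ℝ) ≤ 1 - r/2)]
      nlinarith
    have hε12 : ε^2 ≤ ε/2 := arith2_aux ε hε0 hsmall
    linarith
  calc ‖n - ν‖ = ‖t + (a - 1) • ν‖ := by
        rw [ht_def]; congr 1; rw [sub_smul, one_smul]; abel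
  _ ≤ ‖t‖ + ‖(a-1) • ν‖ := norm_add_le _ _
  _ ≤ δ + |a - 1| := by rw [norm_smul, hν, mul_one]; exact add_le_add H1 le_rfl
  _ ≤ 2 * (δ + δ') := by rw [← hε_def]; linarith

/-- Norm of the tangential part of a vector orthogonal to the edge `u`. -/
lemma tbound_aux (u v n : E3) (hw : cross3 u v ≠ 0) (hnu : ⟪n, u⟫ = 0) :
    ‖n - ⟪n, ‖cross3 u v‖⁻¹ • cross3 u v⟫ • (‖cross3 u v‖⁻¹ • cross3 u v)‖
      * ‖cross3 u v‖ = |⟪n, v⟫| * ‖u‖ := by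
  set w : E3 := cross3 u v with hw_def
  have hwn : ‖w‖ ≠ 0 := norm_ne_zero_iff.mpr hw
  have hkey : (‖w‖^2) • (n - ⟪n, ‖w‖⁻¹ • w⟫ • (‖w‖⁻¹ • w)) = ⟪n, v⟫ • cross3 w u := by
    have h1 : ⟪n, ‖w‖⁻¹ • w⟫ • (‖w‖⁻¹ • w) = (‖w‖⁻¹ * ‖w‖⁻¹ * ⟪n, w⟫) • w := by
      rw [real_inner_smul_right, smul_smul]; ring_nf
    rw [h1, smul_sub, smul_smul]
    have h2 : ‖w‖^2 * (‖w‖⁻¹ * ‖w‖⁻¹ * ⟪n, w⟫) = ⟪n, w⟫ := by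
      field_simp
    rw [h2]
    have h3 : (‖w‖^2) • n = ⟪w, w⟫ • n := by rw [real_inner_self_eq_norm_sq]
    rw [h3, identA_aux u v n, hnu]
    simp [hw_def]
  have hcwu : ‖cross3 w u‖ = ‖w‖ * ‖u‖ := by
    have hsq : ‖cross3 w u‖^2 = (‖w‖ * ‖u‖)^2 := by
      rw [← real_inner_self_eq_norm_sq, lagrange_aux, real_inner_self_eq_norm_sq,
        real_inner_self_eq_norm_sq, cross_orth_left_aux]
      ring
    have h1 : ‖cross3 w u‖ = Real.sqrt (‖cross3 w u‖^2) :=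
      (Real.sqrt_sq (norm_nonneg _)).symm
    rw [h1, hsq, Real.sqrt_sq (by positivity)]
  have hnorms := congrArg norm hkey
  rw [norm_smul, norm_smul, hcwu, Real.norm_eq_abs, Real.norm_eq_abs,
    abs_of_nonneg (sq_nonneg ‖w‖)] at hnorms
  have hw2 : ‖w‖^2 = ‖w‖ * ‖w‖ := sq ‖w‖ ▸ (sq ‖w‖).symm ▸ (by ring)
  apply mul_left_cancel₀ hwn
  calc ‖w‖ * (‖n - ⟪n, ‖w‖⁻¹ • w⟫ • (‖w‖⁻¹ • w)‖ * ‖w‖)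
      = ‖w‖^2 * ‖n - ⟪n, ‖w‖⁻¹ • w⟫ • (‖w‖⁻¹ • w)‖ := by ring
  _ = |⟪n, v⟫| * (‖w‖ * ‖u‖) := hnorms
  _ = ‖w‖ * (|⟪n, v⟫| * ‖u‖) := by ring

lemma diam3_pos (x y z : E3) (hncol : ¬ Collinear ℝ ({x, y, z} : Set E3)) :
    0 < diam3 x y z := by
  by_contra h
  push_neg at h
  have h1 : ‖y - x‖ ≤ 0 := le_trans (le_max_left _ _) h
  have h2 : ‖z - x‖ ≤ 0 := le_trans (le_trans (le_max_left _ _) (le_max_right _ _)) h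
  have hy : y = x := by
    have := le_antisymm h1 (norm_nonneg _)
    rwa [norm_eq_zero, sub_eq_zero] at this
  have hz : z = x := by
    have := le_antisymm h2 (norm_nonneg _)
    rwa [norm_eq_zero, sub_eq_zero] at this
  apply hncol
  rw [hy, hz]
  simp only [Set.insert_idem, Set.pair_eq_singleton]
  exact collinear_singleton ℝ x

lemma norm_le_diam_1 (x y z : E3) : ‖y - x‖ ≤ diam3 x y z := le_max_left _ _
lemma norm_le_diam_2 (x y z : E3) : ‖z - x‖ ≤ diam3 x y z :=
  le_trans (le_max_left _ _) (le_max_right _ _)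
lemma norm_le_diam_3 (x y z : E3) : ‖z - y‖ ≤ diam3 x y z :=
  le_trans (le_max_right _ _) (le_max_right _ _)

/-- The one-triangle tangential bound. -/
lemma triangle_bound (Cstar : ℝ) (hCstar : 0 < Cstar) (x y z : E3) (N : E3 →ᵃ[ℝ] E3)
    (hncol : ¬ Collinear ℝ ({x, y, z} : Set E3))
    (hreg : Cstar * diam3 x y z ^ 2 ≤ area3 x y z)
    (h1 : ⟪N (midpoint ℝ x y), y - x⟫ = 0)
    (h2 : ⟪N (midpoint ℝ y z), z - y⟫ = 0) :
    ‖N (midpoint ℝ x y) -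
        ⟪N (midpoint ℝ x y), unitNormal x y z⟫ • unitNormal x y z‖ ≤
      diam3 x y z * ‖tangGrad N x y z‖ / (4 * Cstar) := by
  set n : E3 := N (midpoint ℝ x y) with hn_def
  set dK : ℝ := diam3 x y z with hd_def
  have hd : 0 < dK := diam3_pos x y z hncol
  have harea : 0 < area3 x y z := lt_of_lt_of_le (by positivity) hreg
  set w : E3 := cross3 (y - x) (z - x) with hw_def
  have hwnorm : ‖w‖ = 2 * area3 x y z := by rw [area3] at harea ⊢; ring
  have hwpos : 0 < ‖w‖ := by rw [hwnorm]; positivity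
  have hw0 : w ≠ 0 := norm_pos_iff.mp hwpos
  -- the midpoint difference
  have hmid : midpoint ℝ y z - midpoint ℝ x y = (2⁻¹:ℝ) • (z - x) := by
    rw [midpoint_eq_smul_add, midpoint_eq_smul_add]
    rw [smul_add, smul_add, smul_sub]
    have : (⅟2 : ℝ) = (2⁻¹ : ℝ) := by norm_num
    rw [this]
    abel
  have hinplane : ((2⁻¹:ℝ) • (z - x)) ∈ Submodule.span ℝ ({y - x, z - x} : Set E3) :=
    Submodule.smul_mem _ _ (Submodule.subset_span (by simp))
  have hproj : tangentProj x y z ((2⁻¹:ℝ) • (z - x)) = (2⁻¹:ℝ) • (z - x) := by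
    rw [tangentProj, ContinuousLinearMap.comp_apply]
    exact Submodule.starProjection_eq_self_iff.mpr hinplane
  have hlin : N (midpoint ℝ y z) = n + (tangGrad N x y z) ((2⁻¹:ℝ) • (z - x)) := by
    have hv := AffineMap.linearMap_vsub N (midpoint ℝ y z) (midpoint ℝ x y)
    rw [vsub_eq_sub, vsub_eq_sub, hmid] at hv
    have : (tangGrad N x y z) ((2⁻¹:ℝ) • (z - x)) = N.linear ((2⁻¹:ℝ) • (z - x)) := by
      rw [tangGrad, ContinuousLinearMap.comp_apply, hproj]
      simp
    rw [this, hv, hn_def]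
    abel
  have hinner : ⟪n, z - y⟫ = -⟪(tangGrad N x y z) ((2⁻¹:ℝ) • (z - x)), z - y⟫ := by
    have := h2
    rw [hlin, inner_add_left] at this
    linarith
  have hinner2 : ⟪n, z - x⟫ = ⟪n, z - y⟫ := by
    have hsplit : z - x = (z - y) + (y - x) := by abel
    rw [hsplit, inner_add_right, h1, add_zero]
  have hin_bd : |⟪n, z - x⟫| ≤ ‖tangGrad N x y z‖ * (dK/2) * dK := by
    rw [hinner2, hinner, abs_neg]
    calc |⟪(tangGrad N x y z) ((2⁻¹:ℝ) • (z - x)), z - y⟫|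
        ≤ ‖(tangGrad N x y z) ((2⁻¹:ℝ) • (z - x))‖ * ‖z - y‖ :=
          abs_real_inner_le_norm _ _
    _ ≤ (‖tangGrad N x y z‖ * ‖(2⁻¹:ℝ) • (z - x)‖) * ‖z - y‖ :=
          mul_le_mul_of_nonneg_right (ContinuousLinearMap.le_opNorm _ _) (norm_nonneg _)
    _ ≤ ‖tangGrad N x y z‖ * (dK/2) * dK := by
          have hzx : ‖(2⁻¹:ℝ) • (z - x)‖ ≤ dK/2 := by
            rw [norm_smul, Real.norm_eq_abs]
            have := norm_le_diam_2 x y z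
            rw [abs_of_nonneg (by norm_num : (0:ℝ) ≤ 2⁻¹)]
            rw [← hd_def] at this
            linarith
          have hzy : ‖z - y‖ ≤ dK := norm_le_diam_3 x y z
          have hop : (0:ℝ) ≤ ‖tangGrad N x y z‖ := norm_nonneg _
          have h1' : ‖tangGrad N x y z‖ * ‖(2⁻¹:ℝ) • (z - x)‖ ≤
              ‖tangGrad N x y z‖ * (dK/2) := mul_le_mul_of_nonneg_left hzx hop
          exact mul_le_mul h1' hzy (norm_nonneg _) (by positivity)
  -- combine with tbound_aux
  have htb := tbound_aux (y - x) (z - x) n hw0 h1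
  rw [← hw_def] at htb
  have hyx : ‖y - x‖ ≤ dK := norm_le_diam_1 x y z
  set T : ℝ := ‖n - ⟪n, ‖w‖⁻¹ • w⟫ • (‖w‖⁻¹ • w)‖ with hT_def
  have hTw : T * ‖w‖ ≤ ‖tangGrad N x y z‖ * (dK/2) * dK * dK := by
    rw [htb]
    have := mul_le_mul hin_bd hyx (norm_nonneg _) (by positivity)
    exact this
  have hw_lb : 2 * Cstar * dK^2 ≤ ‖w‖ := by
    rw [hwnorm]
    nlinarith
  have hgoal : T ≤ dK * ‖tangGrad N x y z‖ / (4 * Cstar) := by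
    rw [le_div_iff₀ (by positivity : (0:ℝ) < 4 * Cstar)]
    have hT0 : 0 ≤ T := norm_nonneg _
    have h1' : T * (2 * Cstar * dK^2) ≤ T * ‖w‖ :=
      mul_le_mul_of_nonneg_left hw_lb hT0
    nlinarith [mul_pos hd hd]
  have huN : unitNormal x y z = ‖w‖⁻¹ • w := by rw [unitNormal]
  rw [huN]
  exact hgoal

lemma cross_ne_zero_aux (Cstar : ℝ) (hCstar : 0 < Cstar) (x y z : E3)
    (hncol : ¬ Collinear ℝ ({x, y, z} : Set E3))
    (hreg : Cstar * diam3 x y z ^ 2 ≤ area3 x y z) :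
    cross3 (y - x) (z - x) ≠ 0 := by
  have hd := diam3_pos x y z hncol
  have harea : 0 < area3 x y z := lt_of_lt_of_le (by positivity) hreg
  have hpos : 0 < ‖cross3 (y - x) (z - x)‖ := by
    rw [area3] at harea; linarith
  exact norm_pos_iff.mp hpos

/-- the comparison lemma for pseudo-unit edge directors on the
shared edge `[x,y]` of two adjacent regular triangles `conv{x,y,z}` and
`conv{x,y,w}`. -/
theorem stmt_5 (Cstar : ℝ) (hCstar : 0 < Cstar) :
    ∃ C > (0 : ℝ), ∃ c > (0 : ℝ),
      ∀ (x y z w : E3) (ν' : E3) (N N' : E3 →ᵃ[ℝ] E3),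
      ¬ Collinear ℝ ({x, y, z} : Set E3) →
      ¬ Collinear ℝ ({x, y, w} : Set E3) →
      Cstar * diam3 x y z ^ 2 ≤ area3 x y z →
      Cstar * diam3 x y w ^ 2 ≤ area3 x y w →
      (ν' = unitNormal x y w ∨ ν' = -unitNormal x y w) →
      unitNormal x y z + ν' ≠ 0 →
      ⟪N (midpoint ℝ x y), y - x⟫ = 0 →
      ⟪N (midpoint ℝ y z), z - y⟫ = 0 →
      ⟪N' (midpoint ℝ x y), y - x⟫ = 0 →
      ⟪N' (midpoint ℝ y w), w - y⟫ = 0 →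
      N (midpoint ℝ x y) = N' (midpoint ℝ x y) →
      ⟪N (midpoint ℝ x y),
        ‖unitNormal x y z + ν'‖⁻¹ • (unitNormal x y z + ν')⟫ = 1 →
      max (diam3 x y z) (diam3 x y w) *
          (‖tangGrad N x y z‖ + ‖tangGrad N' x y w‖) ≤ c →
      ‖N (midpoint ℝ x y) - unitNormal x y z‖ ≤
        C * max (diam3 x y z) (diam3 x y w) *
          (‖tangGrad N x y z‖ + ‖tangGrad N' x y w‖) := by
  refine ⟨1/(2*Cstar), by positivity, 2*Cstar, by positivity, ?_⟩
  intro x y z w ν' N N' hnc1 hnc2 hreg1 hreg2 hν'def hne h1 h2 h1' h2' hagree hunit hsmall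
  set n : E3 := N (midpoint ℝ x y) with hn_def
  set ν : E3 := unitNormal x y z with hν_def
  set ν'' : E3 := unitNormal x y w with hν''_def
  set D : ℝ := ‖tangGrad N x y z‖ with hD_def
  set D' : ℝ := ‖tangGrad N' x y w‖ with hD'_def
  set d : ℝ := max (diam3 x y z) (diam3 x y w) with hd_def
  have hD0 : 0 ≤ D := norm_nonneg _
  have hD'0 : 0 ≤ D' := norm_nonneg _
  have hd1 : 0 < diam3 x y z := diam3_pos x y z hnc1
  have hd2 : 0 < diam3 x y w := diam3_pos x y w hnc2
  have hd0 : 0 < d := lt_of_lt_of_le hd1 (le_max_left _ _)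
  -- unit normals
  have hw1 : cross3 (y - x) (z - x) ≠ 0 := cross_ne_zero_aux Cstar hCstar x y z hnc1 hreg1
  have hw2 : cross3 (y - x) (w - x) ≠ 0 := cross_ne_zero_aux Cstar hCstar x y w hnc2 hreg2
  have hνnorm : ‖ν‖ = 1 := by rw [hν_def, unitNormal]; exact norm_smul_inv_norm hw1
  have hν''norm : ‖ν''‖ = 1 := by rw [hν''_def, unitNormal]; exact norm_smul_inv_norm hw2
  have hν'norm : ‖ν'‖ = 1 := by
    rcases hν'def with h | h
    · rw [h]; exact hν''norm
    · rw [h, norm_neg]; exact hν''norm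
  -- tangential bounds
  have hb1 : ‖n - ⟪n, ν⟫ • ν‖ ≤ d * D / (4 * Cstar) := by
    refine le_trans (triangle_bound Cstar hCstar x y z N hnc1 hreg1 h1 h2) ?_
    gcongr
    exact le_max_left _ _
  have hb2 : ‖n - ⟪n, ν''⟫ • ν''‖ ≤ d * D' / (4 * Cstar) := by
    have := triangle_bound Cstar hCstar x y w N' hnc2 hreg2 h1' h2'
    rw [← hagree] at this
    refine le_trans this ?_
    gcongr
    exact le_max_right _ _
  have hb2' : ‖n - ⟪n, ν'⟫ • ν'‖ ≤ d * D' / (4 * Cstar) := by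
    rcases hν'def with h | h
    · rw [h]; exact hb2
    · have heq : ⟪n, ν'⟫ • ν' = ⟪n, ν''⟫ • ν'' := by
        rw [h, inner_neg_right, neg_smul, smul_neg, neg_neg]
      rw [heq]; exact hb2
  -- the normalization condition
  have hnesum : ν + ν' ≠ 0 := hne
  have hnzsum : ‖ν + ν'‖ ≠ 0 := norm_ne_zero_iff.mpr hnesum
  have H3 : ⟪n, ν + ν'⟫ = ‖ν + ν'‖ := by
    have h := hunit
    rw [real_inner_smul_right] at h
    have h2 : ‖ν + ν'‖ * (‖ν + ν'‖⁻¹ * ⟪n, ν + ν'⟫) = ‖ν + ν'‖ * 1 := by rw [h]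
    rw [← mul_assoc, mul_inv_cancel₀ hnzsum, one_mul, mul_one] at h2
    exact h2
  -- smallness
  have hsmall' : d * D / (4 * Cstar) + d * D' / (4 * Cstar) ≤ 1/2 := by
    have heq : d * D / (4 * Cstar) + d * D' / (4 * Cstar) = d * (D + D') / (4 * Cstar) := by
      ring
    rw [heq, div_le_iff₀ (by positivity : (0:ℝ) < 4 * Cstar)]
    have : d * (D + D') ≤ 2 * Cstar := hsmall
    linarith
  have hkey := key_aux ν ν' n (d * D / (4 * Cstar)) (d * D' / (4 * Cstar))
    hνnorm hν'norm hnesum hb1 hb2' H3 hsmall'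
  refine le_trans hkey (le_of_eq ?_)
  field_simp
  ring
end
end
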